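/- With μ, Δ_n^ℓ, ℘_n^ℓ as above, the identity ℘_n^{ℓ−1}(x)·Δ_n^ℓ + Δ_{n+1}^ℓ·℘_{n−1}^{ℓ−1}(x) = ℘_n^ℓ(x)·Δ_n^{ℓ−1} holds in F[x]. -/

import Mathlib

/-- Shifted Toeplitz determinant `Δ_n^ℓ = det [μ(ℓ + j − i)]_{i,j = 1..n}`, with `Δ_0^ℓ = 1`. -/
noncomputable def Delta {F : Type*} [Field F] (μ : ℤ → F) (n : ℕ) (ℓ : ℤ) : F :=
  (Matrix.of fun i j : Fin n => μ (ℓ + (j : ℤ) - (i : ℤ))).det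

/-- Bordered shifted Toeplitz determinant `℘_n^ℓ(x)`: the (n+1)×(n+1) determinant whose
rows `i = 1..n` are `(μ_{ℓ−i+1}, …, μ_{ℓ−i+1+n})` and whose last row is `(1, x, …, xⁿ)`. -/
noncomputable def wp {F : Type*} [Field F] (μ : ℤ → F) (n : ℕ) (ℓ : ℤ) : Polynomial F :=
  (Matrix.of fun i j : Fin (n + 1) =>
    if (i : ℕ) < n then Polynomial.C (μ (ℓ - (i : ℤ) + (j : ℤ))) else Polynomial.X ^ (j : ℕ)).det

open Polynomial Matrix

private lemma det_updateRow_lin {R : Type*} [CommRing R] {m : Type*} [DecidableEq m] [Fintype m]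
    (A : Matrix m m R) (j : m) {ι : Type*} (s : Finset ι) (c : ι → R) (v : ι → m → R) :
    (A.updateRow j (∑ i ∈ s, c i • v i)).det = ∑ i ∈ s, c i * (A.updateRow j (v i)).det := by
  classical
  induction s using Finset.induction_on with
  | empty =>
      simp only [Finset.sum_empty]
      exact Matrix.det_eq_zero_of_row_eq_zero j (by simp)
  | insert _ _ h ih =>
      rw [Finset.sum_insert h, Matrix.det_updateRow_add, Matrix.det_updateRow_smul,
        Finset.sum_insert h, ih]

noncomputable section

variable {F : Type*} [Field F]

private def auxN (μ : ℤ → F) (n : ℕ) (ℓ : ℤ) : Matrix (Fin (n+3)) (Fin (n+2)) (Polynomial F) :=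
  fun i j => if (i:ℕ) < n+2 then Polynomial.C (μ (ℓ - (i:ℤ) + (j:ℤ))) else Polynomial.X ^ (j:ℕ)

private def auxD (μ : ℤ → F) (n : ℕ) (ℓ : ℤ) (i : Fin (n+3)) : Polynomial F :=
  ((auxN μ n ℓ).submatrix i.succAbove id).det

private lemma aux_cramer (μ : ℤ → F) (n : ℕ) (ℓ : ℤ) (j : Fin (n+2)) :
    ∑ i : Fin (n+3), (-1 : Polynomial F)^(i:ℕ) * auxN μ n ℓ i j * auxD μ n ℓ i = 0 := by
  set N := auxN μ n ℓ with hN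
  set S : Matrix (Fin (n+3)) (Fin (n+3)) (Polynomial F) :=
    fun i k => if h : (k:ℕ) < n+2 then N i ⟨k, h⟩ else N i j with hS
  have hS0 : S.det = 0 := by
    refine Matrix.det_zero_of_column_eq (i := ⟨(j:ℕ), by omega⟩) (j := Fin.last (n+2)) ?_ ?_
    · intro h
      have := congrArg Fin.val h
      simp [Fin.last] at this
      omega
    · intro k
      simp only [hS, Fin.last]
      rw [dif_pos (by simpa using j.isLt), dif_neg (by simp)]
  have hexp := Matrix.det_succ_column S (Fin.last (n+2))
  rw [hS0] at hexp
  have hsub : ∀ i : Fin (n+3),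
      S.submatrix i.succAbove (Fin.last (n+2)).succAbove = N.submatrix i.succAbove id := by
    intro i
    refine Matrix.ext fun p q => ?_
    simp only [Matrix.submatrix_apply, Fin.succAbove_last, id]
    simp only [hS]
    rw [dif_pos (by simpa using q.isLt)]
    exact congrArg _ (Fin.ext rfl)
  have hlastcol : ∀ i : Fin (n+3), S i (Fin.last (n+2)) = N i j := by
    intro i; simp only [hS, Fin.last]; rw [dif_neg (by simp)]
  have key : ∑ i : Fin (n+3), (-1 : Polynomial F)^((i:ℕ) + (n+2)) * N i j * auxD μ n ℓ i = 0 := by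
    have : ∑ i : Fin (n+3), (-1 : Polynomial F)^((i:ℕ) + (n+2)) * N i j * auxD μ n ℓ i
        = ∑ i : Fin (n+2).succ, (-1 : Polynomial F)^((i:ℕ) + ((Fin.last (n+2)):ℕ)) *
            S i (Fin.last (n+2)) * (S.submatrix i.succAbove (Fin.last (n+2)).succAbove).det := by
      refine Finset.sum_congr rfl fun i _ => ?_
      rw [hlastcol, hsub]
      rfl
    rw [this]
    exact hexp.symm
  have hone : (-1 : Polynomial F)^(n+2) * (-1 : Polynomial F)^(n+2) = 1 := by
    rw [← pow_add]
    exact Even.neg_one_pow ⟨n+2, by ring⟩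
  have h2 : ∀ i : Fin (n+3), (-1 : Polynomial F)^(i:ℕ) * N i j * auxD μ n ℓ i =
      (-1 : Polynomial F)^(n+2) * ((-1 : Polynomial F)^((i:ℕ)+(n+2)) * N i j * auxD μ n ℓ i) := by
    intro i
    rw [pow_add]
    linear_combination (-((-1 : Polynomial F)^(i:ℕ) * N i j * auxD μ n ℓ i)) * hone
  rw [Finset.sum_congr rfl (fun i _ => h2 i), ← Finset.mul_sum, key, mul_zero]

private def auxQ (μ : ℤ → F) (n : ℕ) (ℓ : ℤ) : Matrix (Fin (n+1)) (Fin (n+1)) (Polynomial F) :=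
  fun p q => Polynomial.C (μ (ℓ - 1 - (p:ℤ) + (q:ℤ)))

private def auxB (μ : ℤ → F) (n : ℕ) (ℓ : ℤ) (u : Fin (n+1) → Polynomial F) : Polynomial F :=
  ((auxQ μ n ℓ).updateRow (Fin.last n) u).det

private def auxPi {α : Type*} {n : ℕ} (v : Fin (n+2) → α) : Fin (n+1) → α :=
  fun q => v q.castSucc

private lemma aux_B_mid (μ : ℤ → F) (n : ℕ) (ℓ : ℤ) (i : Fin (n+3)) (h1 : 1 ≤ (i:ℕ))
    (h2 : (i:ℕ) ≤ n) : auxB μ n ℓ (auxPi (auxN μ n ℓ i)) = 0 := by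
  have hrow : auxPi (auxN μ n ℓ i) = auxQ μ n ℓ ⟨(i:ℕ) - 1, by omega⟩ := by
    funext q
    simp only [auxPi, auxN, auxQ]
    rw [if_pos (by omega)]
    congr 1
    simp only [Fin.coe_castSucc]
    congr 1
    omega
  rw [auxB, hrow]
  exact Matrix.det_updateRow_eq_zero (by
    intro hc
    have := congrArg Fin.val hc
    simp [Fin.val_last] at this
    omega)

private lemma aux_B_zero (μ : ℤ → F) (n : ℕ) (ℓ : ℤ) :
    auxB μ n ℓ (auxPi (auxN μ n ℓ 0)) = (-1 : Polynomial F)^n * Polynomial.C (Delta μ (n+1) ℓ) := by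
  set A : Matrix (Fin (n+1)) (Fin (n+1)) (Polynomial F) :=
    fun p q => Polynomial.C (μ (ℓ + (q:ℤ) - (p:ℤ))) with hA
  have hmat : (auxQ μ n ℓ).updateRow (Fin.last n) (auxPi (auxN μ n ℓ 0))
      = A.submatrix (finRotate (n+1)) id := by
    refine Matrix.ext fun p q => ?_
    by_cases hp : p = Fin.last n
    · subst hp
      simp only [Matrix.updateRow_self, Matrix.submatrix_apply, id, finRotate_last,
        auxPi, auxN]
      simp only [hA]
      rw [if_pos (by simp)]
      congr 1
      simp [Fin.coe_castSucc]
    · have hlt : (p:ℕ) < n := by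
        have := p.isLt
        rcases Nat.lt_or_ge (p:ℕ) n with h | h
        · exact h
        · exact absurd (Fin.ext (by omega : (p:ℕ) = n)) hp
      rw [Matrix.updateRow_ne hp]
      simp only [Matrix.submatrix_apply, id, finRotate_succ_apply, auxQ]
      simp only [hA]
      have hval : ((p + 1 : Fin (n+1)) : ℕ) = (p:ℕ) + 1 :=
        Fin.val_add_one_of_lt (by rw [Fin.lt_iff_val_lt_val, Fin.val_last]; exact hlt)
      congr 1
      rw [hval]
      push_cast
      ring
  rw [auxB, hmat, Matrix.det_permute, sign_finRotate]
  have hAdet : A.det = Polynomial.C (Delta μ (n+1) ℓ) := by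
    rw [Delta, RingHom.map_det]
    rfl
  rw [hAdet]
  norm_num

private lemma aux_B_n1 (μ : ℤ → F) (n : ℕ) (ℓ : ℤ) :
    auxB μ n ℓ (auxPi (auxN μ n ℓ ⟨n+1, by omega⟩)) = Polynomial.C (Delta μ (n+1) (ℓ-1)) := by
  have hrow : auxPi (auxN μ n ℓ ⟨n+1, by omega⟩) = auxQ μ n ℓ (Fin.last n) := by
    funext q
    simp only [auxPi, auxN, auxQ]
    rw [if_pos (by simp)]
    congr 1
    congr 1
    simp only [Fin.coe_castSucc, Fin.val_last]
    omega
  rw [auxB, hrow, Matrix.updateRow_eq_self, Delta, RingHom.map_det]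
  refine congrArg Matrix.det (Matrix.ext fun p q => ?_)
  simp only [auxQ, RingHom.mapMatrix_apply, Matrix.map_apply, Matrix.of_apply]
  congr 1
  congr 1
  omega

private lemma aux_B_last (μ : ℤ → F) (n : ℕ) (ℓ : ℤ) :
    auxB μ n ℓ (auxPi (auxN μ n ℓ ⟨n+2, by omega⟩)) = wp μ n (ℓ-1) := by
  rw [auxB, wp]
  refine congrArg Matrix.det (Matrix.ext fun p q => ?_)
  by_cases hp : p = Fin.last n
  · subst hp
    rw [Matrix.updateRow_self]
    simp only [auxPi, auxN, Matrix.of_apply]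
    rw [if_neg (by simp), if_neg (by simp [Fin.val_last])]
    simp [Fin.coe_castSucc]
  · have hlt : (p:ℕ) < n := by
      rcases Nat.lt_or_ge (p:ℕ) n with h | h
      · exact h
      · exact absurd (Fin.ext (by have := p.isLt; omega : (p:ℕ) = n)) hp
    rw [Matrix.updateRow_ne hp]
    simp only [auxQ, Matrix.of_apply]
    rw [if_pos hlt]

private lemma aux_D_zero (μ : ℤ → F) (n : ℕ) (ℓ : ℤ) :
    auxD μ n ℓ 0 = wp μ (n+1) (ℓ-1) := by
  rw [auxD, wp]
  refine congrArg Matrix.det (Matrix.ext fun p q => ?_)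
  simp only [auxN, Matrix.submatrix_apply, Fin.succAbove_zero, Matrix.of_apply, id,
    Fin.val_succ]
  by_cases h : (p:ℕ) < n + 1
  · rw [if_pos (by omega), if_pos h]
    congr 1
    push_cast
    ring
  · rw [if_neg (by omega), if_neg h]

private lemma aux_D_n1 (μ : ℤ → F) (n : ℕ) (ℓ : ℤ) :
    auxD μ n ℓ ⟨n+1, by omega⟩ = wp μ (n+1) ℓ := by
  rw [auxD, wp]
  refine congrArg Matrix.det (Matrix.ext fun p q => ?_)
  by_cases h : (p:ℕ) < n + 1
  · have hsa : (⟨n+1, by omega⟩ : Fin (n+3)).succAbove p = p.castSucc :=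
      Fin.succAbove_of_castSucc_lt _ _ (by rw [Fin.lt_iff_val_lt_val]; simpa using h)
    simp only [auxN, Matrix.submatrix_apply, hsa, Matrix.of_apply, id]
    rw [if_pos (by have := p.isLt; simp only [Fin.coe_castSucc]; omega), if_pos h]
    simp only [Fin.coe_castSucc]
  · have hsa : (⟨n+1, by omega⟩ : Fin (n+3)).succAbove p = p.succ :=
      Fin.succAbove_of_le_castSucc _ _ (by rw [Fin.le_iff_val_le_val]; simpa using (by omega : n+1 ≤ (p:ℕ)))
    simp only [auxN, Matrix.submatrix_apply, hsa, Matrix.of_apply, id, Fin.val_succ]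
    rw [if_neg (by have := p.isLt; omega), if_neg h]

private lemma aux_D_last (μ : ℤ → F) (n : ℕ) (ℓ : ℤ) :
    auxD μ n ℓ ⟨n+2, by omega⟩ = Polynomial.C (Delta μ (n+2) ℓ) := by
  rw [auxD, Delta, RingHom.map_det]
  refine congrArg Matrix.det (Matrix.ext fun p q => ?_)
  have hlast : (⟨n+2, by omega⟩ : Fin (n+3)) = Fin.last (n+2) := rfl
  simp only [auxN, Matrix.submatrix_apply, hlast, Fin.succAbove_last, Matrix.map_apply,
    Matrix.of_apply, id]
  rw [if_pos (by have := p.isLt; simp only [Fin.coe_castSucc]; omega)]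
  simp only [RingHom.mapMatrix_apply, Matrix.map_apply, Matrix.of_apply]
  congr 1
  congr 1
  simp only [Fin.coe_castSucc]
  omega

end

/-- `℘_n^{ℓ−1}(x)·Δ_n^ℓ + Δ_{n+1}^ℓ·℘_{n−1}^{ℓ−1}(x) = ℘_n^ℓ(x)·Δ_n^{ℓ−1}` in `F[x]`
(stated for `n ≥ 1`, i.e. with `n` replaced by `n+1`). -/
theorem wp_identity_uno {F : Type*} [Field F] (μ : ℤ → F) (n : ℕ) (ℓ : ℤ) :
    wp μ (n + 1) (ℓ - 1) * Polynomial.C (Delta μ (n + 1) ℓ) +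
      Polynomial.C (Delta μ (n + 2) ℓ) * wp μ n (ℓ - 1) =
    wp μ (n + 1) ℓ * Polynomial.C (Delta μ (n + 1) (ℓ - 1)) := by
  classical
  set f : Fin (n+3) → Polynomial F :=
    fun i => ((-1 : Polynomial F)^(i:ℕ) * auxD μ n ℓ i) * auxB μ n ℓ (auxPi (auxN μ n ℓ i))
    with hf
  have hlin : ∑ i : Fin (n+3), f i = 0 := by
    have hz : (∑ i : Fin (n+3),
        ((-1 : Polynomial F)^(i:ℕ) * auxD μ n ℓ i) • auxPi (auxN μ n ℓ i)) = 0 := by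
      funext q
      simp only [Finset.sum_apply, Pi.smul_apply, smul_eq_mul, Pi.zero_apply, auxPi]
      calc ∑ i : Fin (n+3), ((-1 : Polynomial F)^(i:ℕ) * auxD μ n ℓ i) * auxN μ n ℓ i q.castSucc
          = ∑ i : Fin (n+3), (-1 : Polynomial F)^(i:ℕ) * auxN μ n ℓ i q.castSucc * auxD μ n ℓ i :=
            Finset.sum_congr rfl fun i _ => by ring
        _ = 0 := aux_cramer μ n ℓ q.castSucc
    have hdet := det_updateRow_lin (auxQ μ n ℓ) (Fin.last n) Finset.univ
        (fun i : Fin (n+3) => (-1 : Polynomial F)^(i:ℕ) * auxD μ n ℓ i)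
        (fun i => auxPi (auxN μ n ℓ i))
    rw [hz] at hdet
    have h0 : ((auxQ μ n ℓ).updateRow (Fin.last n) 0).det = 0 :=
      Matrix.det_eq_zero_of_row_eq_zero (Fin.last n) (fun j => by simp)
    rw [h0] at hdet
    simpa [hf, auxB] using hdet.symm
  have hsplit : ∑ i : Fin (n+3), f i
      = f 0 + (f ⟨n+1, by omega⟩ + f ⟨n+2, by omega⟩) := by
    have hvan : ∀ i ∈ Finset.univ,
        i ∉ ({0, ⟨n+1, by omega⟩, ⟨n+2, by omega⟩} : Finset (Fin (n+3))) → f i = 0 := by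
      intro i _ hi
      simp only [Finset.mem_insert, Finset.mem_singleton, not_or] at hi
      have h0 : (i:ℕ) ≠ 0 := fun h => hi.1 (Fin.ext (by simpa using h))
      have h1 : (i:ℕ) ≠ n+1 := fun h => hi.2.1 (Fin.ext h)
      have h2 : (i:ℕ) ≠ n+2 := fun h => hi.2.2 (Fin.ext h)
      have hi3 := i.isLt
      simp only [hf]
      rw [aux_B_mid μ n ℓ i (by omega) (by omega), mul_zero]
    rw [← Finset.sum_subset (Finset.subset_univ _) hvan]
    have hm1 : (0 : Fin (n+3)) ∉ ({⟨n+1, by omega⟩, ⟨n+2, by omega⟩} : Finset (Fin (n+3))) := by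
      simp only [Finset.mem_insert, Finset.mem_singleton, Fin.ext_iff, Fin.val_zero, not_or]
      omega
    have hm2 : (⟨n+1, by omega⟩ : Fin (n+3)) ∉ ({⟨n+2, by omega⟩} : Finset (Fin (n+3))) := by
      simp only [Finset.mem_singleton, Fin.ext_iff]
      omega
    rw [Finset.sum_insert hm1, Finset.sum_insert hm2, Finset.sum_singleton]
  rw [hsplit] at hlin
  simp only [hf] at hlin
  rw [aux_B_zero, aux_B_n1, aux_B_last, aux_D_zero, aux_D_n1, aux_D_last,
    Fin.val_zero, pow_zero, pow_succ (-1 : Polynomial F) (n+1), pow_succ (-1 : Polynomial F) n] at hlin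
  have h_e : (-1 : Polynomial F)^n * (-1 : Polynomial F)^n = 1 := by
    rw [← pow_add]
    exact Even.neg_one_pow ⟨n, by ring⟩
  linear_combination ((-1 : Polynomial F)^n) * hlin -
    (wp μ (n + 1) (ℓ - 1) * Polynomial.C (Delta μ (n + 1) ℓ) +
      Polynomial.C (Delta μ (n + 2) ℓ) * wp μ n (ℓ - 1) -
      wp μ (n + 1) ℓ * Polynomial.C (Delta μ (n + 1) (ℓ - 1))) * h_e
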